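/- If f, f' : X → X' and g, g' : X → X' are continuous maps with f homotopic to g and f' homotopic to g', then the homotopic distance D(f,f') equals D(g,g'). -/

import Mathlib

/-- The (higher) homotopic distance of a family of continuous maps `f i : X → Y`:
the least `l` such that `X` admits an open cover by `l` open sets on each of which
all the maps restrict to pairwise homotopic maps (`∞` if no such cover exists). -/
noncomputable def homDist {X Y : Type*} [TopologicalSpace X] [TopologicalSpace Y]
    {k : ℕ} (f : Fin k → C(X, Y)) : ℕ∞ :=
  sInf ((fun n : ℕ => (n : ℕ∞)) '' {n : ℕ | ∃ U : Fin n → Set X,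
    (∀ j, IsOpen (U j)) ∧ (⋃ j, U j) = Set.univ ∧
    ∀ j i i', ((f i).restrict (U j)).Homotopic ((f i').restrict (U j))})

/-- Homotopic distance of two maps. -/
noncomputable def homDist2 {X Y : Type*} [TopologicalSpace X] [TopologicalSpace Y]
    (f g : C(X, Y)) : ℕ∞ :=
  homDist ![f, g]

private lemma restrict_homotopic {X Y : Type*} [TopologicalSpace X] [TopologicalSpace Y]
    {f g : C(X, Y)} (h : f.Homotopic g) (U : Set X) :
    (f.restrict U).Homotopic (g.restrict U) := by
  have heq : ∀ p : C(X, Y), p.restrict U = p.comp ⟨Subtype.val, continuous_subtype_val⟩ := by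
    intro p; ext x; rfl
  rw [heq f, heq g]
  exact ContinuousMap.Homotopic.comp h (ContinuousMap.Homotopic.refl _)

private lemma homotopic_iff {Z Y : Type*} [TopologicalSpace Z] [TopologicalSpace Y]
    {a b a' b' : C(Z, Y)} (h : a.Homotopic b) (h' : a'.Homotopic b') :
    a.Homotopic a' ↔ b.Homotopic b' :=
  ⟨fun H => (h.symm.trans H).trans h', fun H => (h.trans H).trans h'.symm⟩

theorem homDist2_congr_homotopic {X X' : Type*} [TopologicalSpace X] [TopologicalSpace X']
    (f f' g g' : C(X, X')) (hf : f.Homotopic g) (hf' : f'.Homotopic g') :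
    homDist2 f f' = homDist2 g g' := by
  unfold homDist2 homDist
  congr 1
  ext n
  simp only [Set.mem_image, Set.mem_setOf_eq]
  have key : ∀ i : Fin 2, ((![f, f'] : Fin 2 → C(X, X')) i).Homotopic (![g, g'] i) := by
    intro i
    fin_cases i <;> simpa
  constructor <;> rintro ⟨m, ⟨U, hopen, hcov, hhom⟩, rfl⟩ <;>
    refine ⟨m, ⟨U, hopen, hcov, fun j i i' => ?_⟩, rfl⟩
  · exact (homotopic_iff (restrict_homotopic (key i) (U j))
      (restrict_homotopic (key i') (U j))).mp (hhom j i i')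
  · exact (homotopic_iff (restrict_homotopic (key i) (U j))
      (restrict_homotopic (key i') (U j))).mpr (hhom j i i')
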